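/- Let m ≥ 2 and let α = (α_1,…,α_k), β = (β_1,…,β_l) be compositions of positive integers with α_k ≥ m and β_1 ≥ m; set n = |α|+|β| and r = gcd(|α|−m+1, |β|−m+1). For all 1 ≤ i, j ≤ n−m, one has i ≈ j if and only if i ≡ j (mod r) or i ≡ m−1−j (mod r). Consequently every ≈-class [i] satisfies: [i] ∩ {1,…,r} contains exactly two elements, unless i ≡ m−1−i (mod r), in which case [i] ∩ {1,…,r} = {min [i]}. -/

import Mathlib

open MvPolynomial

/-- Complete homogeneous symmetric polynomial of degree `t` in `N` variables over `ℤ`,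
interpreted as `0` when `t < 0`. -/
noncomputable def hh (N : ℕ) (t : ℤ) : MvPolynomial (Fin N) ℤ :=
  if 0 ≤ t then MvPolynomial.hsymm (Fin N) ℤ t.toNat else 0

/-- `SETf γ` is the set of partial sums `γ₁, γ₁+γ₂, …, γ₁+⋯+γ_{p-1}`
of a composition `γ = (γ₁,…,γ_p)`. -/
def SETf (γ : List ℕ) : Finset ℕ := (Finset.Ico 1 γ.length).image fun p => (γ.take p).sum

/-- The composition of `n` corresponding to a subset `S ⊆ {1,…,n-1}`:
the list of successive differences of the elements of `S ∪ {n}`. -/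
def partsOf (S : Finset ℕ) (n : ℕ) : List ℕ :=
  let L := (insert n S).sort (· ≤ ·)
  L.zipWith (fun b a => b - a) (0 :: L)

/-- An `m`-regular thickened ribbon with exactly one `2 × m` block, encoded as a pair
`α ⊡ β` of compositions with positive parts, `α` ending and `β` starting with a part `≥ m`. -/
structure TRib (m : ℕ) where
  alpha : List ℕ
  beta : List ℕ
  alpha_ne : alpha ≠ []
  beta_ne : beta ≠ []
  alpha_pos : ∀ x ∈ alpha, 0 < x
  beta_pos : ∀ x ∈ beta, 0 < x
  alpha_last : m ≤ alpha.getLastD 0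
  beta_head : m ≤ beta.headD 0

namespace TRib

variable {m : ℕ}

def asz (D : TRib m) : ℕ := D.alpha.sum
def bsz (D : TRib m) : ℕ := D.beta.sum
def nsz (D : TRib m) : ℕ := D.asz + D.bsz

/-- Row lengths from top to bottom: `β_l, …, β_1, α_k, …, α_1`. -/
def rho (D : TRib m) : List ℕ := D.beta.reverse ++ D.alpha.reverse

/-- Number of rows. -/
def len (D : TRib m) : ℕ := D.alpha.length + D.beta.length

/-- `c_i` (0-indexed): `m` at the junction row, `1` otherwise. -/
def cc (D : TRib m) (i : ℕ) : ℕ := if i + 1 = D.beta.length then m else 1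

/-- `λ_i` (0-indexed), from the recurrence `μ_ℓ = 0`, `λ_ℓ = ρ_ℓ`,
`μ_i = λ_{i+1} - c_i`, `λ_i = μ_i + ρ_i`. -/
def lam (D : TRib m) (i : ℕ) : ℤ :=
  (∑ t ∈ Finset.Ico i D.len, (D.rho.getD t 0 : ℤ)) -
    ∑ t ∈ Finset.Ico i (D.len - 1), (D.cc t : ℤ)

/-- `μ_i` (0-indexed). -/
def mu (D : TRib m) (i : ℕ) : ℤ :=
  (∑ t ∈ Finset.Ico (i + 1) D.len, (D.rho.getD t 0 : ℤ)) -
    ∑ t ∈ Finset.Ico i (D.len - 1), (D.cc t : ℤ)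

/-- The skew Schur polynomial `s_D^{(N)} = det(h_{λ_i - μ_j - i + j})`. -/
noncomputable def schur (D : TRib m) (N : ℕ) : MvPolynomial (Fin N) ℤ :=
  Matrix.det (Matrix.of fun i j : Fin D.len =>
    hh N (D.lam i - D.mu j - (i : ℤ) + (j : ℤ)))

/-- Equivalence: equality of skew Schur polynomials in any positive number of variables. -/
def Equiv (D E : TRib m) : Prop := ∀ N : ℕ, 1 ≤ N → D.schur N = E.schur N

/-- The set on which `h_D` takes the value `+`. -/
def hset (D : TRib m) : Finset ℕ :=
  SETf D.alpha ∪ (SETf D.beta).image fun s => D.asz - m + 1 + s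

/-- `h_D(x) = +`. -/
def hplus (D : TRib m) (x : ℕ) : Prop := x ∈ D.hset

/-- The type of `x ∈ {1,…,n-m}`. -/
def typeOf (D : TRib m) (x : ℕ) : ℕ :=
  if x = D.nsz - m + 1 - x then (if x ∈ D.hset then 2 else 0)
  else (if x ∈ D.hset then 1 else 0) + (if D.nsz - m + 1 - x ∈ D.hset then 1 else 0)

/-- Generating relations of the equivalence relation `≈` on `{1,…,n-m}`. -/
def baseRel (D : TRib m) (i j : ℕ) : Prop :=
  (1 ≤ i ∧ i ≤ D.nsz - m ∧ j = D.nsz - m + 1 - i) ∨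
  (1 ≤ i ∧ i ≤ D.asz - 1 ∧ j = D.asz - i) ∨
  (D.asz - m + 2 ≤ i ∧ i ≤ D.nsz - m ∧ j = D.asz + D.nsz + 2 - 2 * m - i)

/-- The equivalence relation `≈`. -/
def erel (D : TRib m) : ℕ → ℕ → Prop := Relation.EqvGen D.baseRel

/-- The `≈`-class `[i]`. -/
def cls (D : TRib m) (i : ℕ) : Set ℕ := {j | D.erel i j}

/-- `r = gcd(|α|-m+1, |β|-m+1)`. -/
def rr (D : TRib m) : ℕ := Nat.gcd (D.asz - m + 1) (D.bsz - m + 1)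

/-! ### Classification of classes in the case `|α| = |β|` -/

/-- The smallest element of the class `[i]`. -/
noncomputable def clsMin (D : TRib m) (i : ℕ) : ℕ := sInf (D.cls i)

/-- `[i] ∈ 𝒜` (case `|α| = |β|`). -/
def classAeq (D : TRib m) (i : ℕ) : Prop :=
  (∀ j ∈ D.cls i, D.typeOf j = 1) ∧
  (D.hplus (D.clsMin i) ↔ ¬ D.hplus (D.asz - D.clsMin i))

/-- `[i] ∈ ℬ` (case `|α| = |β|`). -/
def classBeq (D : TRib m) (i : ℕ) : Prop :=
  ((∀ j ∈ D.cls i, D.typeOf j = 1) ∧ (D.hplus (D.clsMin i) ↔ D.hplus (D.asz - D.clsMin i))) ∨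
  ((∃ j ∈ D.cls i, D.typeOf j = 0 ∨ D.typeOf j = 2) ∧ (∃ j ∈ D.cls i, D.typeOf j = 1))

/-- `[i] ∈ 𝒞` (case `|α| = |β|`). -/
def classCeq (D : TRib m) (i : ℕ) : Prop :=
  ∀ j ∈ D.cls i, D.typeOf j = 0 ∨ D.typeOf j = 2

/-- The set of `k ∈ {1,…,n-m}` with `k ∈ A₁` and `[k] ∈ ℬ` (case `|α| = |β|`). -/
def BsetEq (D : TRib m) : Set ℕ :=
  {k | 1 ≤ k ∧ k ≤ D.nsz - m ∧ D.typeOf k = 1 ∧ D.classBeq k}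

/-- The set of `k ∈ {1,…,n-m}` with `[k] ∈ 𝒜` (case `|α| = |β|`). -/
def AsetEq (D : TRib m) : Set ℕ :=
  {k | 1 ≤ k ∧ k ≤ D.nsz - m ∧ D.classAeq k}

/-- Canonical (case `|α| = |β|`). -/
def canonicalEq (D : TRib m) : Prop :=
  (D.BsetEq.Nonempty ∧ D.hplus (sInf D.BsetEq)) ∨
  (¬ D.BsetEq.Nonempty ∧ D.AsetEq.Nonempty ∧ D.hplus (sInf D.AsetEq)) ∨
  (¬ D.BsetEq.Nonempty ∧ ¬ D.AsetEq.Nonempty)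

/-- Determined (case `|α| = |β|`). -/
def determinedEq (D : TRib m) (x : ℕ) : Prop :=
  ∀ E : TRib m, E.canonicalEq → E.Equiv D → (E.hplus x ↔ D.hplus x)

/-! ### Classification of classes in the case `|α| ≠ |β|` -/

def genA (D : TRib m) (i : ℕ) : Prop :=
  (∀ j ∈ D.cls i, D.typeOf j = 1) ∧
  (∀ j ∈ D.cls i, 1 ≤ j → j + D.rr ≤ D.nsz - m → (D.hplus j ↔ D.hplus (j + D.rr)))

def genB (D : TRib m) (i : ℕ) : Prop :=
  (∃ j ∈ D.cls i, D.typeOf j = 1) ∧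
  (∃ j ∈ D.cls i, 1 ≤ j ∧ j + D.rr ≤ D.nsz - m ∧ ¬(D.hplus j ↔ D.hplus (j + D.rr)))

def genC (D : TRib m) (i : ℕ) : Prop :=
  (∀ j ∈ D.cls i, D.typeOf j = 0) ∨ (∀ j ∈ D.cls i, D.typeOf j = 2)

def genD (D : TRib m) (i : ℕ) : Prop :=
  (∀ j ∈ D.cls i, D.typeOf j = 0 ∨ D.typeOf j = 2) ∧
  (∃ j ∈ D.cls i, D.typeOf j = 0) ∧ (∃ j ∈ D.cls i, D.typeOf j = 2)

/-- Condition (i) for the class `[m-1]`. -/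
def condI (D : TRib m) : Prop :=
  ∀ j, 1 ≤ j → j ≤ D.nsz - m → j % D.rr = (m - 1) % D.rr → j ≠ D.asz →
    (D.hplus j ↔ D.hplus (m - 1))

/-- Condition (ii) for the class `[m-1]`. -/
def condII (D : TRib m) : Prop :=
  ∀ j, 1 ≤ j → j ≤ D.nsz - m → j % D.rr = 0 → j ≠ D.asz - m + 1 →
    (D.hplus j ↔ D.hplus (D.nsz + 2 - 2 * m))

/-- The exceptional set `{|α|-m+1, |α|, |β|-m+1, |β|}`. -/
def excl (D : TRib m) : Set ℕ := {D.asz - m + 1, D.asz, D.bsz - m + 1, D.bsz}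

/-- `[i] ∈ 𝒜` (case `|α| ≠ |β|`). -/
def inA (D : TRib m) (i : ℕ) : Prop :=
  (¬ D.erel i (m - 1) ∧ D.genA i) ∨
  (D.erel i (m - 1) ∧ D.typeOf (m - 1) = 0 ∧ D.genA i) ∨
  (D.erel i (m - 1) ∧ D.typeOf (m - 1) = 1 ∧ D.condI ∧ D.condII)

/-- `[i] ∈ ℬ` (case `|α| ≠ |β|`). -/
def inB (D : TRib m) (i : ℕ) : Prop :=
  (¬ D.erel i (m - 1) ∧ D.genB i) ∨
  (D.erel i (m - 1) ∧ D.typeOf (m - 1) = 0 ∧ D.genB i) ∨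
  (D.erel i (m - 1) ∧ D.typeOf (m - 1) = 1 ∧ ¬(D.condI ∧ D.condII)) ∨
  (D.erel i (m - 1) ∧ D.typeOf (m - 1) = 2 ∧
    ∃ j ∈ D.cls (m - 1), D.typeOf j = 1 ∧ j ∉ D.excl)

/-- `[i] ∈ 𝒞` (case `|α| ≠ |β|`). -/
def inC (D : TRib m) (i : ℕ) : Prop :=
  (¬ D.erel i (m - 1) ∧ D.genC i) ∨
  (D.erel i (m - 1) ∧ D.typeOf (m - 1) = 0 ∧ D.genC i) ∨
  (D.erel i (m - 1) ∧ D.typeOf (m - 1) = 2 ∧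
    (¬ ∃ j ∈ D.cls (m - 1), D.typeOf j = 1 ∧ j ∉ D.excl) ∧ D.condI ∧ D.condII)

/-- `[i] ∈ 𝒟` (case `|α| ≠ |β|`). -/
def inD (D : TRib m) (i : ℕ) : Prop :=
  (¬ D.erel i (m - 1) ∧ D.genD i) ∨
  (D.erel i (m - 1) ∧ D.typeOf (m - 1) = 0 ∧ D.genD i) ∨
  (D.erel i (m - 1) ∧ D.typeOf (m - 1) = 2 ∧
    (¬ ∃ j ∈ D.cls (m - 1), D.typeOf j = 1 ∧ j ∉ D.excl) ∧ ¬(D.condI ∧ D.condII))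

/-- Determined (case `|α| < |β|`; canonical means `|α'| < |β'|`). -/
def determinedLt (D : TRib m) (x : ℕ) : Prop :=
  ∀ E : TRib m, E.asz < E.bsz → E.Equiv D → (E.hplus x ↔ D.hplus x)

end TRib


/-! ### Auxiliary lemmas for `statement5` -/

private lemma aux_exist_k (a s d : ℕ) (hs : 0 < s) (h : Nat.gcd a s ∣ d) :
    ∃ k : ℕ, (k * a) % s = d % s := by
  obtain ⟨c, hc⟩ := h
  have hbez := Nat.gcd_eq_gcd_ab a s
  set A := Nat.gcdA a s with hAdef
  set B := Nat.gcdB a s with hBdef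
  set K : ℤ := ((c : ℤ) * A) % (s : ℤ) with hK
  have hK0 : 0 ≤ K := Int.emod_nonneg _ (by exact_mod_cast hs.ne')
  refine ⟨K.toNat, ?_⟩
  have hKz : (K.toNat : ℤ) = K := Int.toNat_of_nonneg hK0
  have key : (s : ℤ) ∣ (d : ℤ) - (K.toNat : ℤ) * a := by
    rw [hKz, hc]
    obtain ⟨t, ht⟩ := Int.dvd_self_sub_of_emod_eq (a := (c : ℤ) * A) (b := (s : ℤ)) hK.symm
    refine ⟨(a : ℤ) * t + (c : ℤ) * B, ?_⟩
    push_cast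
    linear_combination (c : ℤ) * hbez + (a : ℤ) * ht
  have : K.toNat * a ≡ d [MOD s] := Nat.modEq_iff_dvd.mpr (by push_cast; exact key)
  exact this

private lemma main_aux (m A B : ℕ) (hm : 2 ≤ m) (hA : m ≤ A) (hB : m ≤ B)
    (R : ℕ → ℕ → Prop)
    (hR : ∀ i j, R i j ↔
      ((1 ≤ i ∧ i ≤ A + B - m ∧ j = A + B - m + 1 - i) ∨
       (1 ≤ i ∧ i ≤ A - 1 ∧ j = A - i) ∨
       (A - m + 2 ≤ i ∧ i ≤ A + B - m ∧ j = A + (A + B) + 2 - 2 * m - i))) :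
    (∀ i j, 1 ≤ i → i ≤ A + B - m → 1 ≤ j → j ≤ A + B - m →
      (Relation.EqvGen R i j ↔
        (i % Nat.gcd (A - m + 1) (B - m + 1) = j % Nat.gcd (A - m + 1) (B - m + 1) ∨
         (i + j) % Nat.gcd (A - m + 1) (B - m + 1) =
           (m - 1) % Nat.gcd (A - m + 1) (B - m + 1)))) ∧
    (∀ i, 1 ≤ i → i ≤ A + B - m →
      (¬((i + i) % Nat.gcd (A - m + 1) (B - m + 1) =
          (m - 1) % Nat.gcd (A - m + 1) (B - m + 1)) →
        ({j | Relation.EqvGen R i j} ∩ Set.Icc 1 (Nat.gcd (A - m + 1) (B - m + 1))).ncard = 2) ∧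
      (((i + i) % Nat.gcd (A - m + 1) (B - m + 1) =
          (m - 1) % Nat.gcd (A - m + 1) (B - m + 1)) →
        {j | Relation.EqvGen R i j} ∩ Set.Icc 1 (Nat.gcd (A - m + 1) (B - m + 1)) =
          {sInf {j | Relation.EqvGen R i j}})) := by
  have hEq := Relation.EqvGen.is_equivalence R
  set a := A - m + 1 with ha_def
  set b := B - m + 1 with hb_def
  set N := A + B - m with hN_def
  set r := Nat.gcd a b with hr_def
  have ha1 : 1 ≤ a := by omega
  have hb1 : 1 ≤ b := by omega
  have hab : a + b ≤ N := by omega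
  have hra : r ∣ a := by rw [hr_def]; exact Nat.gcd_dvd_left a b
  have hrb : r ∣ b := by rw [hr_def]; exact Nat.gcd_dvd_right a b
  have hr0 : 0 < r := by rw [hr_def]; exact Nat.gcd_pos_of_pos_left b ha1
  have hrN : r ≤ N := le_trans (Nat.le_of_dvd ha1 hra) (by omega)
  have hmod : ∀ x y : ℕ, r ∣ x → (x + y) % r = y % r := by
    intro x y hx
    obtain ⟨c, rfl⟩ := hx
    rw [Nat.mul_add_mod]
  have hRb : ∀ i j, R i j → (1 ≤ i ∧ i ≤ N ∧ 1 ≤ j ∧ j ≤ N) := by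
    intro i j h
    rcases (hR i j).mp h with ⟨h1, h2, h3⟩ | ⟨h1, h2, h3⟩ | ⟨h1, h2, h3⟩ <;> omega
  have hRsum : ∀ i j, R i j → (i + j) % r = (m - 1) % r := by
    intro i j h
    rcases (hR i j).mp h with ⟨h1, h2, h3⟩ | ⟨h1, h2, h3⟩ | ⟨h1, h2, h3⟩
    · rw [show i + j = (a + b) + (m - 1) by omega, hmod _ _ (Dvd.dvd.add hra hrb)]
    · rw [show i + j = a + (m - 1) by omega, hmod _ _ hra]
    · rw [show i + j = (a + (a + b)) + (m - 1) by omega,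
        hmod _ _ (Dvd.dvd.add hra (Dvd.dvd.add hra hrb))]
  have fwd : ∀ i j, Relation.EqvGen R i j →
      (i % r = j % r ∨ (i + j) % r = (m - 1) % r) := by
    intro i j h
    induction h with
    | rel x y hxy => exact Or.inr (hRsum x y hxy)
    | refl x => exact Or.inl rfl
    | symm x y _ ih =>
        rcases ih with h | h
        · exact Or.inl h.symm
        · exact Or.inr (by rwa [Nat.add_comm] at h)
    | trans x y z _ _ ih1 ih2 =>
        rcases ih1 with h1 | h1 <;> rcases ih2 with h2 | h2
        · exact Or.inl (h1.trans h2)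
        · have h1' : Nat.ModEq r x y := h1
          exact Or.inr ((Nat.ModEq.add_right z h1').trans h2)
        · have h2' : Nat.ModEq r y z := h2
          exact Or.inr ((Nat.ModEq.add_left x (Nat.ModEq.symm h2')).trans h1)
        · refine Or.inl ?_
          have h12 : Nat.ModEq r (y + x) (y + z) := by
            have h1' : Nat.ModEq r (x + y) (m - 1) := h1
            have h2' : Nat.ModEq r (y + z) (m - 1) := h2
            have hxz : Nat.ModEq r (x + y) (y + z) := h1'.trans h2'.symm
            rwa [Nat.add_comm x y] at hxz
          exact Nat.ModEq.add_left_cancel' y h12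
  have step_up : ∀ x, 1 ≤ x → x + a ≤ N → Relation.EqvGen R x (x + a) := by
    intro x hx1 hx2
    have h1 : R x (N + 1 - x) := (hR _ _).mpr (Or.inl ⟨hx1, by omega, rfl⟩)
    have h2 : R (N + 1 - x) (x + a) :=
      (hR _ _).mpr (Or.inr (Or.inr ⟨by omega, by omega, by omega⟩))
    exact Relation.EqvGen.trans _ _ _ (Relation.EqvGen.rel _ _ h1) (Relation.EqvGen.rel _ _ h2)
  have step_down : ∀ x, b + 1 ≤ x → x ≤ N → Relation.EqvGen R x (x - b) := by
    intro x hx1 hx2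
    have h1 : R x (N + 1 - x) := (hR _ _).mpr (Or.inl ⟨by omega, hx2, rfl⟩)
    have h2 : R (N + 1 - x) (x - b) :=
      (hR _ _).mpr (Or.inr (Or.inl ⟨by omega, by omega, by omega⟩))
    exact Relation.EqvGen.trans _ _ _ (Relation.EqvGen.rel _ _ h1) (Relation.EqvGen.rel _ _ h2)
  have g1 : ∀ y, 1 ≤ y → y ≤ a + b →
      Relation.EqvGen R y ((y - 1 + a) % (a + b) + 1) := by
    intro y hy1 hy2
    by_cases h : y ≤ b
    · rw [Nat.mod_eq_of_lt (by omega), show y - 1 + a + 1 = y + a by omega]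
      exact step_up y hy1 (by omega)
    · rw [Nat.mod_eq_sub_mod (by omega), Nat.mod_eq_of_lt (by omega),
        show y - 1 + a - (a + b) + 1 = y - b by omega]
      exact step_down y (by omega) (by omega)
  have orbit : ∀ k y, 1 ≤ y → y ≤ a + b →
      Relation.EqvGen R y ((y - 1 + k * a) % (a + b) + 1) := by
    intro k
    induction k with
    | zero =>
      intro y hy1 hy2
      rw [show y - 1 + 0 * a = y - 1 by omega, Nat.mod_eq_of_lt (by omega),
        show y - 1 + 1 = y by omega]
      exact Relation.EqvGen.refl y
    | succ k ih =>
      intro y hy1 hy2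
      have hz : (y - 1 + k * a) % (a + b) < a + b := Nat.mod_lt _ (by omega)
      have e1 := ih y hy1 hy2
      have e2 := g1 ((y - 1 + k * a) % (a + b) + 1) (by omega) (by omega)
      have e3 : ((y - 1 + k * a) % (a + b) + 1 - 1 + a) % (a + b)
          = (y - 1 + (k + 1) * a) % (a + b) := by
        rw [show (y - 1 + k * a) % (a + b) + 1 - 1 + a
              = (y - 1 + k * a) % (a + b) + a by omega,
          Nat.mod_add_mod, show y - 1 + k * a + a = y - 1 + (k + 1) * a by ring]
      rw [e3] at e2
      exact Relation.EqvGen.trans _ _ _ e1 e2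
  have red : ∀ x, 1 ≤ x → x ≤ N →
      ∃ x', 1 ≤ x' ∧ x' ≤ a + b ∧ x' % r = x % r ∧ Relation.EqvGen R x x' := by
    intro x
    induction x using Nat.strong_induction_on with
    | _ x ih =>
      intro hx1 hx2
      by_cases h : x ≤ a + b
      · exact ⟨x, hx1, h, rfl, Relation.EqvGen.refl x⟩
      · obtain ⟨x', h1, h2, h3, h4⟩ := ih (x - b) (by omega) (by omega) (by omega)
        refine ⟨x', h1, h2, ?_, Relation.EqvGen.trans _ _ _ (step_down x (by omega) hx2) h4⟩
        rw [h3]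
        exact ((Nat.modEq_iff_dvd' (by omega)).mpr
          (by rw [show x - (x - b) = b by omega]; exact hrb) : Nat.ModEq r (x - b) x)
  have conn : ∀ x y, 1 ≤ x → x ≤ N → 1 ≤ y → y ≤ N → x % r = y % r →
      Relation.EqvGen R x y := by
    intro x y hx1 hx2 hy1 hy2 hxy
    obtain ⟨x', hx'1, hx'2, hx'3, ex⟩ := red x hx1 hx2
    obtain ⟨y', hy'1, hy'2, hy'3, ey⟩ := red y hy1 hy2
    have hd : Nat.gcd a (a + b) ∣ a + b + y' - x' := by
      rw [Nat.gcd_self_add_right, ← hr_def]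
      have h5 : x' ≡ a + b + y' [MOD r] := by
        show x' % r = (a + b + y') % r
        rw [hmod _ _ (Dvd.dvd.add hra hrb), hx'3, hxy, ← hy'3]
      exact (Nat.modEq_iff_dvd' (by omega)).mp h5
    obtain ⟨k, hk⟩ := aux_exist_k a (a + b) _ (by omega) hd
    have e3 : (x' - 1 + k * a) % (a + b) + 1 = y' := by
      rw [Nat.add_mod (x' - 1), hk, ← Nat.add_mod,
        show x' - 1 + (a + b + y' - x') = (y' - 1) + (a + b) by omega,
        Nat.add_mod_right, Nat.mod_eq_of_lt (by omega)]
      omega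
    have e4 := orbit k x' hx'1 hx'2
    rw [e3] at e4
    exact hEq.trans (hEq.trans ex e4) (hEq.symm ey)
  have mirror : ∀ x y, 1 ≤ x → x ≤ N → 1 ≤ y → y ≤ N →
      (x + y) % r = (m - 1) % r → Relation.EqvGen R x y := by
    intro x y hx1 hx2 hy1 hy2 hxy
    have h1 : R x (N + 1 - x) := (hR _ _).mpr (Or.inl ⟨hx1, hx2, rfl⟩)
    have h2 : (N + 1 - x) % r = y % r := by
      have hs1 : Nat.ModEq r (x + (N + 1 - x)) (m - 1) := by
        show (x + (N + 1 - x)) % r = (m - 1) % r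
        rw [show x + (N + 1 - x) = (a + b) + (m - 1) by omega]
        exact hmod _ _ (Dvd.dvd.add hra hrb)
      have hxy' : Nat.ModEq r (x + y) (m - 1) := hxy
      have hs2 : Nat.ModEq r (x + (N + 1 - x)) (x + y) := hs1.trans hxy'.symm
      exact Nat.ModEq.add_left_cancel' x hs2
    exact hEq.trans (Relation.EqvGen.rel _ _ h1) (conn _ _ (by omega) (by omega) hy1 hy2 h2)
  have uniq : ∀ u v, 1 ≤ u → u ≤ r → 1 ≤ v → v ≤ r → u % r = v % r → u = v := by
    intro u v hu1 hu2 hv1 hv2 h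
    by_cases hu : u = r
    · subst hu
      by_cases hv : v = r
      · omega
      · rw [Nat.mod_self, Nat.mod_eq_of_lt (by omega)] at h; omega
    · by_cases hv : v = r
      · subst hv; rw [Nat.mod_eq_of_lt (by omega), Nat.mod_self] at h; omega
      · rw [Nat.mod_eq_of_lt (by omega), Nat.mod_eq_of_lt (by omega)] at h; omega
  have rep : ∀ c : ℕ, ∃ u, 1 ≤ u ∧ u ≤ r ∧ u % r = c % r := by
    intro c
    by_cases h : c % r = 0
    · exact ⟨r, by omega, le_refl r, by rw [Nat.mod_self, h]⟩
    · refine ⟨c % r, by omega, ?_, by rw [Nat.mod_mod_of_dvd c dvd_rfl]⟩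
      have := Nat.mod_lt c hr0
      omega
  have minrep : ∀ u j, 1 ≤ u → u ≤ r → 1 ≤ j → u % r = j % r → u ≤ j := by
    intro u j hu1 hu2 hj1 h
    by_contra hlt
    push_neg at hlt
    have hj : j % r = j := Nat.mod_eq_of_lt (by omega)
    by_cases hu : u = r
    · subst hu; rw [Nat.mod_self] at h; omega
    · rw [Nat.mod_eq_of_lt (by omega)] at h; omega
  have hrange : ∀ i j, Relation.EqvGen R i j → ((1 ≤ i ∧ i ≤ N) ↔ (1 ≤ j ∧ j ≤ N)) := by
    intro i j h
    induction h with
    | rel x y hxy =>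
        have := hRb x y hxy
        constructor <;> intro <;> exact ⟨by omega, by omega⟩
    | refl x => exact Iff.rfl
    | symm _ _ _ ih => exact ih.symm
    | trans _ _ _ _ _ ih1 ih2 => exact ih1.trans ih2
  constructor
  · intro i j hi1 hi2 hj1 hj2
    constructor
    · exact fwd i j
    · rintro (h | h)
      · exact conn i j hi1 hi2 hj1 hj2 h
      · exact mirror i j hi1 hi2 hj1 hj2 h
  · intro i hi1 hi2
    obtain ⟨u, hu1, hu2, hu3⟩ := rep i
    obtain ⟨v, hv1, hv2, hv3⟩ := rep (m - 1 + (r - i % r))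
    have hv4 : (i + v) % r = (m - 1) % r := by
      have h1 : Nat.ModEq r (i + v) (i + (m - 1 + (r - i % r))) :=
        Nat.ModEq.add_left i (hv3 : Nat.ModEq r v (m - 1 + (r - i % r)))
      have h2 : i + (m - 1 + (r - i % r)) = (i - i % r + r) + (m - 1) := by
        have hle := Nat.mod_le i r
        have hlt := Nat.mod_lt i hr0
        omega
      have h3 : r ∣ i - i % r + r := Dvd.dvd.add (Nat.dvd_sub_mod i) dvd_rfl
      calc (i + v) % r = (i + (m - 1 + (r - i % r))) % r := h1
        _ = ((i - i % r + r) + (m - 1)) % r := by rw [h2]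
        _ = (m - 1) % r := hmod _ _ h3
    have hmemu : Relation.EqvGen R i u :=
      conn i u hi1 hi2 (by omega) (by omega) hu3.symm
    have hmemv : Relation.EqvGen R i v :=
      mirror i v hi1 hi2 (by omega) (by omega) hv4
    have hclass : ∀ x, Relation.EqvGen R i x → 1 ≤ x → x ≤ r → x = u ∨ x = v := by
      intro x hx hx1 hx2
      rcases fwd i x hx with h | h
      · exact Or.inl (uniq x u hx1 hx2 hu1 hu2 (by rw [hu3]; exact h.symm))
      · have h' : Nat.ModEq r (i + x) (m - 1) := h
        have hv4' : Nat.ModEq r (i + v) (m - 1) := hv4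
        have hc : Nat.ModEq r (i + x) (i + v) := h'.trans hv4'.symm
        exact Or.inr (uniq x v hx1 hx2 hv1 hv2 (Nat.ModEq.add_left_cancel' i hc))
    refine ⟨?_, ?_⟩
    · intro hne
      have huv : u ≠ v := by
        intro he
        apply hne
        have hu3' : Nat.ModEq r u i := hu3
        have hv4' : Nat.ModEq r (i + v) (m - 1) := hv4
        have h1 : Nat.ModEq r (i + i) (i + v) := by
          rw [← he]
          exact Nat.ModEq.add_left i hu3'.symm
        exact h1.trans hv4'
      have hset : {j | Relation.EqvGen R i j} ∩ Set.Icc 1 r = {u, v} := by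
        ext x
        simp only [Set.mem_inter_iff, Set.mem_setOf_eq, Set.mem_Icc, Set.mem_insert_iff,
          Set.mem_singleton_iff]
        constructor
        · rintro ⟨hx, hx1, hx2⟩
          exact hclass x hx hx1 hx2
        · rintro (rfl | rfl)
          · exact ⟨hmemu, hu1, hu2⟩
          · exact ⟨hmemv, hv1, hv2⟩
      rw [hset]
      exact Set.ncard_pair huv
    · intro heq
      have hall : ∀ x, Relation.EqvGen R i x → x % r = i % r := by
        intro x hx
        rcases fwd i x hx with h | h
        · exact h.symm
        · have h' : Nat.ModEq r (i + x) (m - 1) := h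
          have heq' : Nat.ModEq r (i + i) (m - 1) := heq
          have hc : Nat.ModEq r (i + x) (i + i) := h'.trans heq'.symm
          exact Nat.ModEq.add_left_cancel' i hc
      have hinf : sInf {j | Relation.EqvGen R i j} = u := by
        apply le_antisymm
        · exact Nat.sInf_le hmemu
        · have hne' : {j | Relation.EqvGen R i j}.Nonempty := ⟨u, hmemu⟩
          have hmem := Nat.sInf_mem hne'
          have h1 := hall _ hmem
          have h2 := (hrange i _ hmem).mp ⟨hi1, hi2⟩
          exact minrep u _ hu1 hu2 (by omega) (by rw [hu3]; exact h1.symm)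
      rw [hinf]
      ext x
      simp only [Set.mem_inter_iff, Set.mem_setOf_eq, Set.mem_Icc, Set.mem_singleton_iff]
      constructor
      · rintro ⟨hx, hx1, hx2⟩
        exact uniq x u hx1 hx2 hu1 hu2 (by rw [hu3]; exact hall x hx)
      · rintro rfl
        exact ⟨hmemu, hu1, hu2⟩

open TRib in
/-- Characterization of the equivalence relation `≈` on `{1,…,n-m}`
(Lemma `lem:symmetry`). -/
theorem statement5 (m : ℕ) (hm : 2 ≤ m) (D : TRib m) :
    (∀ i j, 1 ≤ i → i ≤ D.nsz - m → 1 ≤ j → j ≤ D.nsz - m →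
      (D.erel i j ↔ (i % D.rr = j % D.rr ∨ (i + j) % D.rr = (m - 1) % D.rr))) ∧
    (∀ i, 1 ≤ i → i ≤ D.nsz - m →
      (¬((i + i) % D.rr = (m - 1) % D.rr) →
        (D.cls i ∩ Set.Icc 1 D.rr).ncard = 2) ∧
      ((i + i) % D.rr = (m - 1) % D.rr →
        D.cls i ∩ Set.Icc 1 D.rr = {sInf (D.cls i)})) := by
  have hA : m ≤ D.asz := by
    have h1 : D.alpha.getLastD 0 ∈ D.alpha := by
      rw [List.getLastD_eq_getLast?, List.getLast?_eq_getLast D.alpha_ne, Option.getD_some]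
      exact List.getLast_mem D.alpha_ne
    exact le_trans D.alpha_last (List.single_le_sum (fun x _ => Nat.zero_le x) _ h1)
  have hB : m ≤ D.bsz := by
    have h1 : D.beta.headD 0 ∈ D.beta := by
      rw [List.headD_eq_head?, List.head?_eq_head D.beta_ne, Option.getD_some]
      exact List.head_mem D.beta_ne
    exact le_trans D.beta_head (List.single_le_sum (fun x _ => Nat.zero_le x) _ h1)
  exact main_aux m D.asz D.bsz hm hA hB D.baseRel (fun i j => Iff.rfl)
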